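/- The collection of stable subsets of a group G is closed under finite intersections: if A, B ⊆ G are stable, then A ∩ B is stable. -/
import Mathlib

section Ramsey

variable (c : ℕ → ℕ → Bool)

private lemma exists_step {S : Set ℕ} (hS : S.Infinite) :
    ∃ p : ℕ × Bool × {T : Set ℕ // T.Infinite},
      p.1 ∈ S ∧ (p.2.2 : Set ℕ) ⊆ S ∧ ∀ s ∈ (p.2.2 : Set ℕ), p.1 < s ∧ c p.1 s = p.2.1 := by
  obtain ⟨t, ht⟩ := hS.nonempty
  have hU : ({s | s ∈ S ∧ t < s} : Set ℕ).Infinite := by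
    have : ({s | s ∈ S ∧ t < s} : Set ℕ) = S \ Set.Iic t := by
      ext s; simp [Set.mem_Iic, not_le]
    rw [this]
    exact hS.diff (Set.finite_Iic t)
  have hsplit : ({s | s ∈ S ∧ t < s} : Set ℕ) =
      {s | s ∈ S ∧ t < s ∧ c t s = true} ∪ {s | s ∈ S ∧ t < s ∧ c t s = false} := by
    ext s
    by_cases h : c t s = true <;> simp_all [and_assoc]
  rw [hsplit, Set.infinite_union] at hU
  rcases hU with h | h
  · exact ⟨⟨t, true, ⟨_, h⟩⟩, ht, fun s hs => hs.1, fun s hs => ⟨hs.2.1, hs.2.2⟩⟩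
  · exact ⟨⟨t, false, ⟨_, h⟩⟩, ht, fun s hs => hs.1, fun s hs => ⟨hs.2.1, hs.2.2⟩⟩

private noncomputable def step (S : {S : Set ℕ // S.Infinite}) :
    ℕ × Bool × {T : Set ℕ // T.Infinite} :=
  Classical.choose (exists_step c S.2)

private lemma step_spec (S : {S : Set ℕ // S.Infinite}) :
    (step c S).1 ∈ (S : Set ℕ) ∧ ((step c S).2.2 : Set ℕ) ⊆ (S : Set ℕ) ∧
      ∀ s ∈ ((step c S).2.2 : Set ℕ), (step c S).1 < s ∧ c (step c S).1 s = (step c S).2.1 :=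
  Classical.choose_spec (exists_step c S.2)

private noncomputable def seq : ℕ → {S : Set ℕ // S.Infinite}
  | 0 => ⟨Set.univ, Set.infinite_univ⟩
  | n + 1 => (step c (seq n)).2.2

private noncomputable def pt (n : ℕ) : ℕ := (step c (seq c n)).1
private noncomputable def col (n : ℕ) : Bool := (step c (seq c n)).2.1

private lemma seq_subset {n m : ℕ} (h : n ≤ m) : (seq c m : Set ℕ) ⊆ (seq c n : Set ℕ) := by
  induction m with
  | zero => simp_all
  | succ k ih =>
    rcases Nat.lt_or_ge n (k + 1) with h' | h'
    · exact ((step_spec c (seq c k)).2.1).trans (ih (Nat.lt_succ_iff.mp h'))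
    · have : n = k + 1 := le_antisymm h h'
      subst this; exact fun _ hx => hx

private lemma pt_mem_succ {n m : ℕ} (h : n < m) : pt c m ∈ (seq c (n + 1) : Set ℕ) := by
  have h1 : pt c m ∈ (seq c m : Set ℕ) := (step_spec c (seq c m)).1
  exact seq_subset c h h1

private lemma pt_lt_and_col {n m : ℕ} (h : n < m) :
    pt c n < pt c m ∧ c (pt c n) (pt c m) = col c n :=
  (step_spec c (seq c n)).2.2 _ (pt_mem_succ c h)

/-- Infinite Ramsey theorem for pairs with two colors. -/
private lemma ramsey2 :
    ∃ (x : ℕ → ℕ) (d : Bool), StrictMono x ∧ ∀ i j : ℕ, i < j → c (x i) (x j) = d := by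
  have hcol : ({n | col c n = true} : Set ℕ).Infinite ∨
      ({n | col c n = false} : Set ℕ).Infinite := by
    rw [← Set.infinite_union]
    have : ({n | col c n = true} ∪ {n | col c n = false} : Set ℕ) = Set.univ := by
      ext n; by_cases h : col c n = true <;> simp_all
    rw [this]; exact Set.infinite_univ
  rcases hcol with h | h
  · refine ⟨fun n => pt c (Nat.nth (fun n => col c n = true) n), true,
      fun i j hij => (pt_lt_and_col c ((Nat.nth_strictMono h) hij)).1, fun i j hij => ?_⟩
    rw [(pt_lt_and_col c ((Nat.nth_strictMono h) hij)).2]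
    exact Nat.nth_mem_of_infinite h i
  · refine ⟨fun n => pt c (Nat.nth (fun n => col c n = false) n), false,
      fun i j hij => (pt_lt_and_col c ((Nat.nth_strictMono h) hij)).1, fun i j hij => ?_⟩
    rw [(pt_lt_and_col c ((Nat.nth_strictMono h) hij)).2]
    exact Nat.nth_mem_of_infinite h i

end Ramsey

/-- `A` is stable in `G` if there are no sequences `a b : ℕ → G` with `a i * b j ∈ A ↔ i ≤ j`. -/
def IsStable {G : Type*} [Group G] (A : Set G) : Prop :=
  ¬ ∃ a b : ℕ → G, ∀ i j : ℕ, a i * b j ∈ A ↔ i ≤ j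

theorem isStable_inter {G : Type*} [Group G] (A B : Set G)
    (hA : IsStable A) (hB : IsStable B) : IsStable (A ∩ B) := by
  rintro ⟨a, b, hab⟩
  classical
  obtain ⟨x, d, hx, hcol⟩ := ramsey2 (fun j i => decide (a i * b j ∈ A))
  cases d with
  | false =>
    apply hA
    refine ⟨fun n => a (x n), fun n => b (x n), fun i j => ?_⟩
    constructor
    · intro h
      by_contra hij
      have := hcol j i (lt_of_not_ge hij)
      simp only [decide_eq_false_iff_not] at this
      exact this h
    · intro h
      exact ((hab (x i) (x j)).mpr (hx.monotone h)).1
  | true =>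
    apply hB
    refine ⟨fun n => a (x n), fun n => b (x n), fun i j => ?_⟩
    constructor
    · intro h
      by_contra hij
      have hlt : j < i := lt_of_not_ge hij
      have hxlt : x j < x i := hx hlt
      have hnot : ¬ (a (x i) * b (x j) ∈ A ∩ B) := by
        intro hm
        exact absurd ((hab (x i) (x j)).mp hm) (not_le.mpr hxlt)
      have hinA : a (x i) * b (x j) ∈ A := by
        have := hcol j i hlt
        simpa using this
      exact hnot ⟨hinA, h⟩
    · intro h
      exact ((hab (x i) (x j)).mpr (hx.monotone h)).2
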